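/- Lemma 2.1. Let {α_I}_{I∈𝒟} be a sequence of nonnegative numbers and let w be a weight. Then there exists C₁ such that Σ_{I∈𝒟} ⟨f w^{1/2}⟩_I² α_I ≤ C₁ ‖f‖₂² for every f ∈ L²[0,1) if and only if there exists C₂ such that for every J ∈ 𝒟, (1/|J|) Σ_{I⊆J, I∈𝒟} ⟨w⟩_I² α_I ≤ C₂ ⟨w⟩_J. -/

import Mathlib

/-!
Lemma 2.1: for a nonnegative sequence `{α_I}` and a weight `w`, the embedding
`Σ_I ⟨f w^{1/2}⟩_I² α_I ≤ C₁ ‖f‖₂²` for all `f ∈ L²` holds iff the Carleson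
condition `(1/|J|) Σ_{I⊆J} ⟨w⟩_I² α_I ≤ C₂ ⟨w⟩_J` holds for all dyadic `J`.
-/

open MeasureTheory Set
open scoped ENNReal Classical

noncomputable section

/-- The dyadic interval `[k/2^n, (k+1)/2^n)`. -/
def dyad (n k : ℕ) : Set ℝ := Set.Ico ((k : ℝ) / 2 ^ n) (((k : ℝ) + 1) / 2 ^ n)

/-- The length of a dyadic interval of generation `n`. -/
def dlen (n : ℕ) : ℝ := ((1 : ℝ) / 2) ^ n

/-- The average `⟨u⟩_I` of `u` over the dyadic interval `I = dyad n k`. -/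
def davg (u : ℝ → ℝ) (n k : ℕ) : ℝ := (2 : ℝ) ^ n * ∫ x in dyad n k, u x

/-- A weight: integrable on `[0,1)` and a.e. positive there. -/
def IsWeight (u : ℝ → ℝ) : Prop :=
  IntegrableOn u (Set.Ico (0 : ℝ) 1) ∧
    ∀ᵐ x ∂(volume.restrict (Set.Ico (0 : ℝ) 1)), 0 < u x


/-! ### Algebraic lemmas -/

lemma lem21_convexity (g1 g2 s1 s2 : ℝ) (h1 : 0 < s1) (h2 : 0 < s2) :
    (g1+g2)^2/(s1+s2) ≤ g1^2/s1 + g2^2/s2 := by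
  rw [div_add_div _ _ (ne_of_gt h1) (ne_of_gt h2), div_le_div_iff₀ (by positivity) (by positivity)]
  nlinarith [sq_nonneg (g1*s2 - g2*s1), mul_pos h1 h2]

lemma lem21_key2 (X w q σ : ℝ) (hX : 0 ≤ X) (hq : 0 ≤ q) (hσ : 0 < σ) (hwp : 0 < w)
    (h1 : σ ≤ 2*w) (h2 : σ + q ≤ 2*w) :
    q*(X/w^2) + 4*(X/(σ+q)) ≤ 4*(X/σ) := by
  have hσq : 0 < σ + q := by positivity
  rw [show q*(X/w^2) = (q*X)/w^2 by ring, show 4*(X/(σ+q)) = (4*X)/(σ+q) by ring,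
    show 4*(X/σ) = (4*X)/σ by ring,
    div_add_div _ _ (by positivity : (w^2:ℝ) ≠ 0) (ne_of_gt hσq),
    div_le_div_iff₀ (by positivity) hσ]
  nlinarith [mul_nonneg (mul_nonneg hq hX)
    (sub_nonneg.mpr (mul_le_mul h1 h2 (by positivity) (by positivity) : σ*(σ+q) ≤ 2*w*(2*w)))]

lemma lem21_key (C w1 w2 g1 g2 s1 s2 m : ℝ) (hC : 0 < C) (hw1 : 0 < w1) (hw2 : 0 < w2)
    (hs1 : 0 ≤ s1) (hs2 : 0 ≤ s2) (hm : 0 ≤ m) (hcar : m + s1 + s2 ≤ C*(w1+w2)) :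
    m * ((g1+g2)/(w1+w2))^2 + 4*C*((g1+g2)^2/((w1+w2)+(m+s1+s2)/C)) ≤
      4*C*(g1^2/(w1+s1/C)) + 4*C*(g2^2/(w2+s2/C)) := by
  set σ1 := w1 + s1/C with hσ1
  set σ2 := w2 + s2/C with hσ2
  have hσ1p : 0 < σ1 := by positivity
  have hσ2p : 0 < σ2 := by positivity
  have hconv := lem21_convexity g1 g2 σ1 σ2 hσ1p hσ2p
  have hD : (w1+w2)+(m+s1+s2)/C = (σ1+σ2) + m/C := by rw [hσ1, hσ2]; ring
  set g := g1 + g2 with hg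
  set w := w1 + w2 with hwdef
  have hwp : 0 < w := by positivity
  have hσ : 0 < σ1 + σ2 := by positivity
  have hdiv : s1/C + s2/C = (s1+s2)/C := (add_div s1 s2 C).symm
  have hle2w : σ1 + σ2 ≤ 2*w := by
    have h : (s1+s2)/C ≤ w := by rw [div_le_iff₀ hC]; nlinarith
    rw [hσ1, hσ2, hwdef]
    rw [hwdef] at h
    calc w1 + s1/C + (w2 + s2/C) = (w1+w2) + (s1/C + s2/C) := by ring
      _ = (w1+w2) + (s1+s2)/C := by rw [hdiv]
      _ ≤ (w1+w2) + (w1+w2) := by linarith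
      _ = 2*(w1+w2) := by ring
  have hD2w : (σ1+σ2) + m/C ≤ 2*w := by
    have h : (m+s1+s2)/C ≤ w := by rw [div_le_iff₀ hC]; nlinarith
    rw [← hD]; linarith
  have hmC : 0 ≤ m/C := by positivity
  have k2 := lem21_key2 (g^2) w (m/C) (σ1+σ2) (sq_nonneg g) hmC hσ hwp hle2w hD2w
  have main : m*(g/w)^2 + 4*C*(g^2/((σ1+σ2)+m/C)) ≤ 4*C*(g^2/(σ1+σ2)) := by
    rw [div_pow, show m * (g^2/w^2) = C*((m/C)*(g^2/w^2)) by field_simp,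
      show 4*C*(g^2/((σ1+σ2)+m/C)) = C*(4*(g^2/((σ1+σ2)+m/C))) by ring,
      show 4*C*(g^2/(σ1+σ2)) = C*(4*(g^2/(σ1+σ2))) by ring, ← mul_add]
    exact mul_le_mul_of_nonneg_left k2 hC.le
  calc m * (g/w)^2 + 4*C*(g^2/((w1+w2)+(m+s1+s2)/C))
      = m*(g/w)^2 + 4*C*(g^2/((σ1+σ2)+m/C)) := by rw [hD]
    _ ≤ 4*C*(g^2/(σ1+σ2)) := main
    _ ≤ 4*C*(g1^2/σ1) + 4*C*(g2^2/σ2) := by nlinarith [hconv]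

/-! ### Dyadic interval combinatorics -/

lemma two_pow_pos' (n : ℕ) : (0:ℝ) < 2 ^ n := by positivity

lemma dyad_lt (n k : ℕ) : ((k:ℝ)) / 2 ^ n < ((k:ℝ)+1) / 2 ^ n :=
  div_lt_div_of_pos_right (by linarith) (two_pow_pos' n)

lemma dyad_nonempty (n k : ℕ) : (dyad n k).Nonempty := by
  rw [dyad, Set.nonempty_Ico]; exact dyad_lt n k

lemma measurableSet_dyad (n k : ℕ) : MeasurableSet (dyad n k) := measurableSet_Ico

lemma dyad_zero : dyad 0 0 = Set.Ico (0:ℝ) 1 := by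
  simp [dyad]

lemma dyad_subset_unit {n k : ℕ} (h : k < 2 ^ n) : dyad n k ⊆ Set.Ico (0:ℝ) 1 := by
  rw [dyad]
  apply Set.Ico_subset_Ico
  · positivity
  · rw [div_le_one (two_pow_pos' n)]
    have h2 : ((k+1 : ℕ) : ℝ) ≤ ((2^n : ℕ) : ℝ) := Nat.cast_le.mpr h
    push_cast at h2; linarith

lemma dyad_subset_iff {n' k' n k : ℕ} :
    dyad n' k' ⊆ dyad n k ↔ ∃ d, n' = n + d ∧ k * 2^d ≤ k' ∧ k' + 1 ≤ (k+1) * 2^d := by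
  rw [dyad, dyad, Set.Ico_subset_Ico_iff (dyad_lt n' k')]
  constructor
  · rintro ⟨h1, h2⟩
    have e1 : ((k:ℝ)+1)/2^n = (k:ℝ)/2^n + 1/2^n := add_div _ _ _
    have e2 : ((k':ℝ)+1)/2^n' = (k':ℝ)/2^n' + 1/2^n' := add_div _ _ _
    have hle : (1:ℝ)/2^n' ≤ 1/2^n := by linarith
    have hpow : (2:ℝ)^n ≤ 2^n' := (one_div_le_one_div (two_pow_pos' n') (two_pow_pos' n)).mp hle
    have hn : n ≤ n' := by
      by_contra hc
      push_neg at hc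
      exact absurd hpow (not_le.mpr (pow_lt_pow_right₀ one_lt_two hc))
    refine ⟨n' - n, by omega, ?_, ?_⟩
    · have h := (div_le_div_iff₀ (two_pow_pos' n) (two_pow_pos' n')).mp h1
      have hsplit : (2:ℝ)^n' = 2^n * 2^(n'-n) := by
        rw [← pow_add]; congr 1; omega
      rw [hsplit] at h
      have h3 : (k:ℝ) * 2^(n'-n) * 2^n ≤ (k':ℝ) * 2^n := by nlinarith [two_pow_pos' n]
      have h4 : (k:ℝ) * 2^(n'-n) ≤ (k':ℝ) :=
        le_of_mul_le_mul_right (by linarith) (two_pow_pos' n)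
      exact_mod_cast h4
    · have h := (div_le_div_iff₀ (two_pow_pos' n') (two_pow_pos' n)).mp h2
      have hsplit : (2:ℝ)^n' = 2^n * 2^(n'-n) := by
        rw [← pow_add]; congr 1; omega
      rw [hsplit] at h
      have h3 : ((k':ℝ)+1) * 2^n ≤ ((k:ℝ)+1) * 2^(n'-n) * 2^n := by nlinarith [two_pow_pos' n]
      have h4 : ((k':ℝ)+1) ≤ ((k:ℝ)+1) * 2^(n'-n) :=
        le_of_mul_le_mul_right (by linarith) (two_pow_pos' n)
      exact_mod_cast h4
  · rintro ⟨d, rfl, h1, h2⟩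
    have hc1 : ((k:ℝ) * 2^d) ≤ (k':ℝ) := by exact_mod_cast h1
    have hc2 : ((k':ℝ)+1) ≤ ((k:ℝ)+1) * 2^d := by exact_mod_cast h2
    constructor
    · rw [div_le_div_iff₀ (two_pow_pos' n) (two_pow_pos' (n+d)), pow_add]
      nlinarith [two_pow_pos' n, two_pow_pos' d]
    · rw [div_le_div_iff₀ (two_pow_pos' (n+d)) (two_pow_pos' n), pow_add]
      nlinarith [two_pow_pos' n, two_pow_pos' d]

lemma dyad_child0_subset (n k : ℕ) : dyad (n+1) (2*k) ⊆ dyad n k := by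
  rw [dyad_subset_iff]
  exact ⟨1, rfl, by omega, by omega⟩

lemma dyad_child1_subset (n k : ℕ) : dyad (n+1) (2*k+1) ⊆ dyad n k := by
  rw [dyad_subset_iff]
  exact ⟨1, rfl, by omega, by omega⟩

lemma dyad_le_of_subset {n' k' n k : ℕ} (h : dyad n' k' ⊆ dyad n k) : n ≤ n' := by
  obtain ⟨d, rfl, -, -⟩ := dyad_subset_iff.mp h; omega

lemma subset_lt_pow {n' k' n k : ℕ} (h : dyad n' k' ⊆ dyad n k) (hk : k < 2^n) : k' < 2^n' := by
  obtain ⟨d, rfl, h1, h2⟩ := dyad_subset_iff.mp h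
  have hk1 : k + 1 ≤ 2^n := hk
  have : (k+1) * 2^d ≤ 2^n * 2^d := Nat.mul_le_mul_right _ hk1
  rw [pow_add]
  omega

lemma dyad_trichotomy {n' k' n k : ℕ} (h : dyad n' k' ⊆ dyad n k) :
    (n' = n ∧ k' = k) ∨ dyad n' k' ⊆ dyad (n+1) (2*k) ∨ dyad n' k' ⊆ dyad (n+1) (2*k+1) := by
  obtain ⟨d, rfl, h1, h2⟩ := dyad_subset_iff.mp h
  cases d with
  | zero => exact Or.inl ⟨by omega, by simp at h1 h2; omega⟩
  | succ e =>
    right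
    rw [pow_succ] at h1 h2
    by_cases hk : k' < (2*k+1) * 2^e
    · left
      rw [dyad_subset_iff]
      refine ⟨e, by omega, by linarith, hk⟩
    · right
      rw [dyad_subset_iff]
      push_neg at hk
      refine ⟨e, by omega, hk, by linarith⟩

lemma dyad_union (n k : ℕ) :
    dyad (n+1) (2*k) ∪ dyad (n+1) (2*k+1) = dyad n k := by
  have e1 : (((2*k:ℕ)):ℝ) / 2^(n+1) = (k:ℝ)/2^n := by
    push_cast; rw [pow_succ]; field_simp
  have e2 : (((2*k:ℕ)):ℝ) + 1 = (((2*k+1:ℕ)):ℝ) := by push_cast; ring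
  have e3 : ((((2*k+1:ℕ)):ℝ) + 1) / 2^(n+1) = ((k:ℝ)+1)/2^n := by
    push_cast; rw [pow_succ]; field_simp; ring
  rw [dyad, dyad, dyad, e1, e2, e3]
  apply Set.Ico_union_Ico_eq_Ico
  · rw [← e1, ← e2]; exact (dyad_lt (n+1) (2*k)).le
  · rw [← e3]; exact (dyad_lt (n+1) (2*k+1)).le

lemma dyad_children_disjoint (n k : ℕ) :
    Disjoint (dyad (n+1) (2*k)) (dyad (n+1) (2*k+1)) := by
  have e2 : (((2*k:ℕ)):ℝ) + 1 = (((2*k+1:ℕ)):ℝ) := by push_cast; ring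
  rw [dyad, dyad, e2]
  exact Set.Ico_disjoint_Ico_same

lemma not_subset_both {n' k' n k : ℕ} (h0 : dyad n' k' ⊆ dyad (n+1) (2*k))
    (h1 : dyad n' k' ⊆ dyad (n+1) (2*k+1)) : False := by
  obtain ⟨x, hx⟩ := dyad_nonempty n' k'
  exact Set.disjoint_left.mp (dyad_children_disjoint n k) (h0 hx) (h1 hx)

lemma not_parent_subset_child {n k j : ℕ} : ¬ dyad n k ⊆ dyad (n+1) j := by
  intro h
  obtain ⟨d, hd, -, -⟩ := dyad_subset_iff.mp h
  omega

/-! ### Truncated sums over the dyadic tree -/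

/-- Finite truncated sum over the dyadic subtree of `dyad n k` down to generation `N`. -/
def Ssum (μ : ℕ → ℕ → ℝ) (N : ℕ) (n k : ℕ) : ℝ :=
  if n ≤ N then μ n k + Ssum μ N (n+1) (2*k) + Ssum μ N (n+1) (2*k+1) else 0
termination_by N + 1 - n
decreasing_by all_goals omega

lemma Ssum_of_le {μ : ℕ → ℕ → ℝ} {N n k : ℕ} (h : n ≤ N) :
    Ssum μ N n k = μ n k + Ssum μ N (n+1) (2*k) + Ssum μ N (n+1) (2*k+1) := by
  rw [Ssum, if_pos h]

lemma Ssum_of_gt {μ : ℕ → ℕ → ℝ} {N n k : ℕ} (h : N < n) : Ssum μ N n k = 0 := by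
  rw [Ssum, if_neg (by omega)]

lemma Ssum_nonneg {μ : ℕ → ℕ → ℝ} (hμ : ∀ n k, 0 ≤ μ n k) (N : ℕ) :
    ∀ m n k, N + 1 - n ≤ m → 0 ≤ Ssum μ N n k := by
  intro m
  induction m with
  | zero => intro n k h; rw [Ssum_of_gt (by omega)]
  | succ m ih =>
    intro n k h
    by_cases hn : n ≤ N
    · rw [Ssum_of_le hn]
      have h0 := ih (n+1) (2*k) (by omega)
      have h1 := ih (n+1) (2*k+1) (by omega)
      have := hμ n k
      linarith
    · rw [Ssum_of_gt (by omega)]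

lemma Ssum_nonneg' {μ : ℕ → ℕ → ℝ} (hμ : ∀ n k, 0 ≤ μ n k) (N n k : ℕ) :
    0 ≤ Ssum μ N n k := Ssum_nonneg hμ N (N+1-n) n k le_rfl

/-- three-way tsum splitting in `ℝ≥0∞` -/
lemma lem21_tsum_split (a : ℕ × ℕ → ℝ≥0∞) (P P₀ P₁ : ℕ × ℕ → Prop) (q : ℕ × ℕ)
    (hq : P q) (h0 : ∀ p, P₀ p → P p) (h1 : ∀ p, P₁ p → P p)
    (hd : ∀ p, ¬(P₀ p ∧ P₁ p)) (h0q : ¬P₀ q) (h1q : ¬P₁ q) :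
    a q + (∑' p, if P₀ p then a p else 0) + (∑' p, if P₁ p then a p else 0) ≤
      ∑' p, if P p then a p else 0 := by
  have hsingle : a q = ∑' p : ℕ × ℕ, if p = q then a p else 0 := by
    rw [tsum_eq_single q (by intro b hb; rw [if_neg hb])]
    simp
  rw [hsingle, ← ENNReal.tsum_add, ← ENNReal.tsum_add]
  apply ENNReal.tsum_le_tsum
  intro p
  by_cases hp : p = q
  · subst hp
    rw [if_pos rfl, if_neg h0q, if_neg h1q, if_pos hq]
    simp
  · rw [if_neg hp]
    by_cases hp0 : P₀ p
    · rw [if_pos hp0, if_neg (fun h => hd p ⟨hp0, h⟩), if_pos (h0 p hp0)]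
      simp
    · rw [if_neg hp0]
      by_cases hp1 : P₁ p
      · rw [if_pos hp1, if_pos (h1 p hp1)]; simp
      · rw [if_neg hp1]; simp

lemma ofReal_Ssum_le_tsum {μ : ℕ → ℕ → ℝ} (hμ : ∀ n k, 0 ≤ μ n k) (N : ℕ) :
    ∀ m n k, N + 1 - n ≤ m →
      ENNReal.ofReal (Ssum μ N n k) ≤
        ∑' p : ℕ × ℕ, if dyad p.1 p.2 ⊆ dyad n k then ENNReal.ofReal (μ p.1 p.2) else 0 := by
  intro m
  induction m with
  | zero => intro n k h; rw [Ssum_of_gt (by omega)]; simp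
  | succ m ih =>
    intro n k h
    by_cases hn : n ≤ N
    · rw [Ssum_of_le hn]
      have hS0 := Ssum_nonneg' hμ N (n+1) (2*k)
      have hS1 := Ssum_nonneg' hμ N (n+1) (2*k+1)
      rw [ENNReal.ofReal_add (by linarith [hμ n k]) hS1, ENNReal.ofReal_add (hμ n k) hS0]
      have key := lem21_tsum_split (fun p => ENNReal.ofReal (μ p.1 p.2))
        (fun p => dyad p.1 p.2 ⊆ dyad n k)
        (fun p => dyad p.1 p.2 ⊆ dyad (n+1) (2*k))
        (fun p => dyad p.1 p.2 ⊆ dyad (n+1) (2*k+1))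
        (n, k) (fun _ hx => hx)
        (fun p hp => hp.trans (dyad_child0_subset n k))
        (fun p hp => hp.trans (dyad_child1_subset n k))
        (fun p hp => not_subset_both hp.1 hp.2)
        not_parent_subset_child not_parent_subset_child
      refine le_trans ?_ key
      gcongr
      · exact ih (n+1) (2*k) (by omega)
      · exact ih (n+1) (2*k+1) (by omega)
    · rw [Ssum_of_gt (by omega)]; simp

lemma finsetsum_le_Ssum {μ : ℕ → ℕ → ℝ} (hμ : ∀ n k, 0 ≤ μ n k) (N : ℕ) :
    ∀ m n k, N + 1 - n ≤ m → ∀ F : Finset (ℕ × ℕ),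
      (∀ p ∈ F, dyad p.1 p.2 ⊆ dyad n k ∧ p.1 ≤ N) →
      (∑ p ∈ F, ENNReal.ofReal (μ p.1 p.2)) ≤ ENNReal.ofReal (Ssum μ N n k) := by
  intro m
  induction m with
  | zero =>
    intro n k h F hF
    have : F = ∅ := by
      rw [Finset.eq_empty_iff_forall_notMem]
      intro p hp
      have h1 := (hF p hp).1
      have h2 := (hF p hp).2
      have := dyad_le_of_subset h1
      omega
    subst this; simp
  | succ m ih =>
    intro n k h F hF
    by_cases hn : n ≤ N
    · classical
      set F₀ := F.filter (fun p => p = (n, k)) with hF₀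
      set Frest := F.filter (fun p => ¬ p = (n, k)) with hFrest
      set F₁ := Frest.filter (fun p => dyad p.1 p.2 ⊆ dyad (n+1) (2*k)) with hF₁
      set F₂ := Frest.filter (fun p => ¬ dyad p.1 p.2 ⊆ dyad (n+1) (2*k)) with hF₂
      have hsplit : (∑ p ∈ F, ENNReal.ofReal (μ p.1 p.2)) =
          (∑ p ∈ F₀, ENNReal.ofReal (μ p.1 p.2)) +
          ((∑ p ∈ F₁, ENNReal.ofReal (μ p.1 p.2)) + (∑ p ∈ F₂, ENNReal.ofReal (μ p.1 p.2))) := by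
        rw [hF₁, hF₂, Finset.sum_filter_add_sum_filter_not,
          hF₀, hFrest, Finset.sum_filter_add_sum_filter_not]
      rw [hsplit, ← add_assoc, Ssum_of_le hn]
      have hS0 := Ssum_nonneg' hμ N (n+1) (2*k)
      have hS1 := Ssum_nonneg' hμ N (n+1) (2*k+1)
      rw [ENNReal.ofReal_add (by linarith [hμ n k]) hS1, ENNReal.ofReal_add (hμ n k) hS0]
      gcongr
      · -- F₀ ⊆ {(n,k)}
        calc ∑ p ∈ F₀, ENNReal.ofReal (μ p.1 p.2)
            ≤ ∑ p ∈ ({(n,k)} : Finset (ℕ × ℕ)), ENNReal.ofReal (μ p.1 p.2) := by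
              apply Finset.sum_le_sum_of_subset
              intro p hp
              simp only [hF₀, Finset.mem_filter] at hp
              simp [hp.2]
          _ = ENNReal.ofReal (μ n k) := by simp
      · apply ih (n+1) (2*k) (by omega)
        intro p hp
        simp only [hF₁, hFrest, Finset.mem_filter] at hp
        exact ⟨hp.2, (hF p hp.1.1).2⟩
      · apply ih (n+1) (2*k+1) (by omega)
        intro p hp
        simp only [hF₂, hFrest, Finset.mem_filter] at hp
        obtain ⟨⟨hpF, hpne⟩, hpnot⟩ := hp
        rcases dyad_trichotomy (hF p hpF).1 with ⟨h1, h2⟩ | hsub | hsub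
        · exact absurd (Prod.ext h1 h2) hpne
        · exact absurd hsub hpnot
        · exact ⟨hsub, (hF p hpF).2⟩
    · have : F = ∅ := by
        rw [Finset.eq_empty_iff_forall_notMem]
        intro p hp
        have := dyad_le_of_subset (hF p hp).1
        have := (hF p hp).2
        omega
      subst this; rw [Ssum_of_gt (by omega)]; simp

/-! ### The Bellman function induction -/

lemma bellman_aux (C : ℝ) (hC : 0 < C) (μ t G g W : ℕ → ℕ → ℝ)
    (hμ : ∀ n k, 0 ≤ μ n k)
    (ht : ∀ n k, k < 2^n → t n k = μ n k * (g n k / W n k)^2)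
    (hW : ∀ n k, k < 2^n → 0 < W n k)
    (hCS : ∀ n k, k < 2^n → g n k ^ 2 ≤ G n k * W n k)
    (hGadd : ∀ n k, k < 2^n → G n k = G (n+1) (2*k) + G (n+1) (2*k+1))
    (hgadd : ∀ n k, k < 2^n → g n k = g (n+1) (2*k) + g (n+1) (2*k+1))
    (hWadd : ∀ n k, k < 2^n → W n k = W (n+1) (2*k) + W (n+1) (2*k+1))
    (N : ℕ) (hcar : ∀ n k, k < 2^n → Ssum μ N n k ≤ C * W n k) :
    ∀ m n k, N + 1 - n ≤ m → k < 2^n →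
      Ssum t N n k ≤ 4*C*(G n k - g n k^2/(W n k + Ssum μ N n k / C)) := by
  intro m
  induction m with
  | zero =>
    intro n k h hk
    rw [Ssum_of_gt (μ := t) (by omega), Ssum_of_gt (μ := μ) (by omega)]
    have hWp := hW n k hk
    have := hCS n k hk
    have hfrac : g n k ^ 2 / (W n k + 0 / C) ≤ G n k := by
      rw [zero_div, add_zero, div_le_iff₀ hWp]
      linarith
    nlinarith
  | succ m ih =>
    intro n k h hk
    by_cases hn : n ≤ N
    · have hk0 : 2*k < 2^(n+1) := by rw [pow_succ]; omega
      have hk1 : 2*k+1 < 2^(n+1) := by rw [pow_succ]; omega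
      have ih0 := ih (n+1) (2*k) (by omega) hk0
      have ih1 := ih (n+1) (2*k+1) (by omega) hk1
      rw [Ssum_of_le (μ := t) hn, Ssum_of_le (μ := μ) hn]
      set s1 := Ssum μ N (n+1) (2*k) with hs1def
      set s2 := Ssum μ N (n+1) (2*k+1) with hs2def
      have hs1 : 0 ≤ s1 := Ssum_nonneg' hμ _ _ _
      have hs2 : 0 ≤ s2 := Ssum_nonneg' hμ _ _ _
      have hW1 := hW (n+1) (2*k) hk0
      have hW2 := hW (n+1) (2*k+1) hk1
      have hcarnk := hcar n k hk
      rw [Ssum_of_le (μ := μ) hn, hWadd n k hk] at hcarnk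
      have hkey := lem21_key C (W (n+1) (2*k)) (W (n+1) (2*k+1)) (g (n+1) (2*k)) (g (n+1) (2*k+1))
        s1 s2 (μ n k) hC hW1 hW2 hs1 hs2 (hμ n k) (by linarith)
      have htnk := ht n k hk
      rw [hgadd n k hk, hWadd n k hk] at htnk
      rw [htnk, hGadd n k hk, hgadd n k hk, hWadd n k hk]
      nlinarith [hkey, ih0, ih1]
    · have h2 := Ssum_of_gt (μ := t) (N := N) (n := n) (k := k) (by omega)
      have h3 := Ssum_of_gt (μ := μ) (N := N) (n := n) (k := k) (by omega)
      rw [h2, h3]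
      have hWp := hW n k hk
      have := hCS n k hk
      have hfrac : g n k ^ 2 / (W n k + 0 / C) ≤ G n k := by
        rw [zero_div, add_zero, div_le_iff₀ hWp]
        linarith
      nlinarith

/-! ### Measure-theoretic lemmas -/

lemma memℒp_mul_integrable {μ : Measure ℝ} {f g : ℝ → ℝ} (hf : MemLp f 2 μ)
    (hg : MemLp g 2 μ) : Integrable (fun x => f x * g x) μ := by
  have h : MemLp (f • g) 1 μ := by
    apply hg.smul hf
  rw [memLp_one_iff_integrable] at h
  exact h

lemma cs_main {μ : Measure ℝ} {f g : ℝ → ℝ} (hf : MemLp f 2 μ) (hg : MemLp g 2 μ)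
    (hg0 : 0 ≤ᵐ[μ] g) :
    (∫ x, f x * g x ∂μ)^2 ≤ (∫ x, (f x)^2 ∂μ) * (∫ x, (g x)^2 ∂μ) := by
  have hint : Integrable (fun x => f x * g x) μ := memℒp_mul_integrable hf hg
  have h1 : |∫ x, f x * g x ∂μ| ≤ ∫ x, |f x| * g x ∂μ := by
    calc |∫ x, f x * g x ∂μ| ≤ ∫ x, |f x| * |g x| ∂μ := by
          simpa [Real.norm_eq_abs, abs_mul] using
            norm_integral_le_integral_norm (μ := μ) (f := fun x => f x * g x)
      _ = ∫ x, |f x| * g x ∂μ := by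
          apply integral_congr_ae
          filter_upwards [hg0] with x hx
          rw [abs_of_nonneg hx]
  have hfa : MemLp (fun x => |f x|) (ENNReal.ofReal 2) μ := by
    rw [show ENNReal.ofReal 2 = 2 by norm_num]
    exact hf.abs
  have hga : MemLp g (ENNReal.ofReal 2) μ := by
    rw [show ENNReal.ofReal 2 = 2 by norm_num]
    exact hg
  have h2 := integral_mul_le_Lp_mul_Lq_of_nonneg
    (by constructor <;> norm_num : Real.HolderConjugate 2 2)
    (Filter.Eventually.of_forall (fun x => abs_nonneg (f x))) hg0 hfa hga
  have hA : ∫ x, |f x| ^ (2:ℝ) ∂μ = ∫ x, (f x)^2 ∂μ := by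
    apply integral_congr_ae
    filter_upwards with x
    rw [show ((2:ℝ)) = ((2:ℕ):ℝ) from by norm_num, Real.rpow_natCast]
    simp [sq_abs]
  have hB : ∫ x, g x ^ (2:ℝ) ∂μ = ∫ x, (g x)^2 ∂μ := by
    apply integral_congr_ae
    filter_upwards with x
    rw [show ((2:ℝ)) = ((2:ℕ):ℝ) from by norm_num, Real.rpow_natCast]
  rw [hA, hB] at h2
  set A := ∫ x, (f x)^2 ∂μ with hAdef
  set B := ∫ x, (g x)^2 ∂μ with hBdef
  have hAnn : 0 ≤ A := integral_nonneg (fun x => sq_nonneg _)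
  have hBnn : 0 ≤ B := integral_nonneg (fun x => sq_nonneg _)
  have h3 : (∫ x, f x * g x ∂μ)^2 = |∫ x, f x * g x ∂μ|^2 := (sq_abs _).symm
  rw [h3]
  have h4 : |∫ x, f x * g x ∂μ|^2 ≤ (A ^ ((1:ℝ)/2) * B ^ ((1:ℝ)/2))^2 := by
    apply pow_le_pow_left₀ (abs_nonneg _)
    exact le_trans h1 h2
  refine le_trans h4 (le_of_eq ?_)
  rw [mul_pow, ← Real.rpow_natCast (A ^ ((1:ℝ)/2)) 2, ← Real.rpow_natCast (B ^ ((1:ℝ)/2)) 2,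
    ← Real.rpow_mul hAnn, ← Real.rpow_mul hBnn]
  norm_num

lemma sqrt_memℒp {w : ℝ → ℝ} (hw : IsWeight w) :
    MemLp (fun x => Real.sqrt (w x)) 2 (volume.restrict (Set.Ico (0:ℝ) 1)) := by
  have hm : AEStronglyMeasurable (fun x => Real.sqrt (w x))
      (volume.restrict (Set.Ico (0:ℝ) 1)) :=
    Real.continuous_sqrt.comp_aestronglyMeasurable hw.1.aestronglyMeasurable
  rw [memLp_two_iff_integrable_sq hm]
  apply hw.1.congr
  filter_upwards [hw.2] with x hx
  rw [Real.sq_sqrt hx.le]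

lemma wint_pos {w : ℝ → ℝ} (hw : IsWeight w) {n k : ℕ} (h : k < 2^n) :
    0 < ∫ x in dyad n k, w x := by
  have hsub := dyad_subset_unit h
  have w0 : 0 ≤ᵐ[volume.restrict (dyad n k)] w :=
    ae_restrict_of_ae_restrict_of_subset hsub (hw.2.mono fun x hx => hx.le)
  have hwi : IntegrableOn w (dyad n k) := hw.1.mono_set hsub
  rw [setIntegral_pos_iff_support_of_nonneg_ae w0 hwi]
  have hnull : volume ({x : ℝ | ¬ 0 < w x} ∩ Set.Ico (0:ℝ) 1) = 0 := by
    have := ae_iff.mp hw.2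
    rwa [Measure.restrict_apply' measurableSet_Ico] at this
  have hdiffnull : volume (dyad n k \ Function.support w) = 0 := by
    apply measure_mono_null ?_ hnull
    intro x hx
    have hx0 : w x = 0 := Function.notMem_support.mp hx.2
    exact ⟨by simp [hx0], hsub hx.1⟩
  have hd : volume (dyad n k) ≤
      volume (Function.support w ∩ dyad n k) + volume (dyad n k \ Function.support w) := by
    apply le_trans (measure_mono ?_) (measure_union_le _ _)
    intro x hx
    by_cases hs : x ∈ Function.support w
    · exact Or.inl ⟨hs, hx⟩
    · exact Or.inr ⟨hx, hs⟩
  have hvol : 0 < volume (dyad n k) := by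
    rw [dyad, Real.volume_Ico]
    apply ENNReal.ofReal_pos.mpr
    rw [div_sub_div_same, show ((k:ℝ)+1) - k = 1 by ring]
    positivity
  rw [hdiffnull, add_zero] at hd
  exact lt_of_lt_of_le hvol hd

lemma integral_dyad_split {u : ℝ → ℝ} (hu : IntegrableOn u (Set.Ico (0:ℝ) 1))
    {n k : ℕ} (h : k < 2^n) :
    ∫ x in dyad n k, u x =
      (∫ x in dyad (n+1) (2*k), u x) + ∫ x in dyad (n+1) (2*k+1), u x := by
  have hk0 : 2*k < 2^(n+1) := by rw [pow_succ]; omega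
  have hk1 : 2*k+1 < 2^(n+1) := by rw [pow_succ]; omega
  rw [← dyad_union n k]
  exact setIntegral_union (dyad_children_disjoint n k) (measurableSet_dyad _ _)
    (hu.mono_set (dyad_subset_unit hk0)) (hu.mono_set (dyad_subset_unit hk1))

/-! ### Auxiliary functions for the main proof -/

def Gfun (f : ℝ → ℝ) : ℕ → ℕ → ℝ := fun n k => ∫ x in dyad n k, (f x)^2
def gfun (w f : ℝ → ℝ) : ℕ → ℕ → ℝ := fun n k => ∫ x in dyad n k, f x * Real.sqrt (w x)
def Wfun (w : ℝ → ℝ) : ℕ → ℕ → ℝ := fun n k => ∫ x in dyad n k, w x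
def mufun (w : ℝ → ℝ) (α : ℕ → ℕ → ℝ) : ℕ → ℕ → ℝ := fun n k => (davg w n k)^2 * α n k
def tfun (w f : ℝ → ℝ) (α : ℕ → ℕ → ℝ) : ℕ → ℕ → ℝ :=
  fun n k => (davg (fun t => f t * Real.sqrt (w t)) n k)^2 * α n k

lemma davg_mul_dlen (u : ℝ → ℝ) (n k : ℕ) :
    davg u n k * dlen n = ∫ x in dyad n k, u x := by
  rw [davg, dlen, one_div, inv_pow]
  rw [mul_comm ((2:ℝ)^n) _, mul_assoc, mul_inv_cancel₀ (ne_of_gt (two_pow_pos' n)), mul_one]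

/-- Backward direction: the Carleson condition implies the embedding. -/
lemma backward_main (w : ℝ → ℝ) (hw : IsWeight w) (α : ℕ → ℕ → ℝ) (hα : ∀ n k, 0 ≤ α n k)
    (C₂ : ℝ) (hC₂0 : 0 ≤ C₂)
    (hcar : ∀ m j : ℕ, j < 2 ^ m →
      (∑' p : ℕ × ℕ,
          if dyad p.1 p.2 ⊆ dyad m j then
            ENNReal.ofReal ((davg w p.1 p.2) ^ 2 * α p.1 p.2)
          else 0) ≤
        ENNReal.ofReal (C₂ * davg w m j * dlen m))
    (f : ℝ → ℝ) (hf : MemLp f 2 (volume.restrict (Set.Ico (0 : ℝ) 1))) :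
    (∑' p : ℕ × ℕ,
        if p.2 < 2 ^ p.1 then
          ENNReal.ofReal
            ((davg (fun t => f t * Real.sqrt (w t)) p.1 p.2) ^ 2 * α p.1 p.2)
        else 0) ≤
      ENNReal.ofReal ((4*(C₂+1)) * ∫ x in Set.Ico (0 : ℝ) 1, (f x) ^ 2) := by
  set C := C₂ + 1 with hCdef
  have hC : 0 < C := by positivity
  have hμnn : ∀ n k, 0 ≤ mufun w α n k := fun n k => mul_nonneg (sq_nonneg _) (hα n k)
  have htnn : ∀ n k, 0 ≤ tfun w f α n k := fun n k => mul_nonneg (sq_nonneg _) (hα n k)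
  have hWpos : ∀ n k, k < 2^n → 0 < Wfun w n k := fun n k h => wint_pos hw h
  have hsq := sqrt_memℒp hw
  have hfsqInt : IntegrableOn (fun x => (f x)^2) (Set.Ico (0:ℝ) 1) := hf.integrable_sq
  have hfwInt : IntegrableOn (fun x => f x * Real.sqrt (w x)) (Set.Ico (0:ℝ) 1) :=
    memℒp_mul_integrable hf hsq
  have ht : ∀ n k, k < 2^n → tfun w f α n k = mufun w α n k * (gfun w f n k / Wfun w n k)^2 := by
    intro n k hk
    have hWne : (∫ x in dyad n k, w x) ≠ 0 := ne_of_gt (hWpos n k hk)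
    show (davg (fun t => f t * Real.sqrt (w t)) n k)^2 * α n k =
      ((davg w n k)^2 * α n k) *
        ((∫ x in dyad n k, f x * Real.sqrt (w x)) / (∫ x in dyad n k, w x))^2
    rw [davg, davg]
    field_simp
  have hCS : ∀ n k, k < 2^n → gfun w f n k ^ 2 ≤ Gfun f n k * Wfun w n k := by
    intro n k hk
    have hsub := dyad_subset_unit hk
    have hfr : MemLp f 2 (volume.restrict (dyad n k)) :=
      hf.mono_measure (Measure.restrict_mono hsub le_rfl)
    have hsr : MemLp (fun x => Real.sqrt (w x)) 2 (volume.restrict (dyad n k)) :=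
      hsq.mono_measure (Measure.restrict_mono hsub le_rfl)
    have h := cs_main hfr hsr (ae_of_all _ fun x => Real.sqrt_nonneg _)
    have e : (∫ x in dyad n k, (Real.sqrt (w x))^2) = Wfun w n k := by
      apply integral_congr_ae
      filter_upwards [ae_restrict_of_ae_restrict_of_subset hsub hw.2] with x hx
      rw [Real.sq_sqrt hx.le]
    rw [e] at h
    exact h
  have hGadd : ∀ n k, k < 2^n → Gfun f n k = Gfun f (n+1) (2*k) + Gfun f (n+1) (2*k+1) :=
    fun n k hk => integral_dyad_split hfsqInt hk
  have hgadd : ∀ n k, k < 2^n → gfun w f n k = gfun w f (n+1) (2*k) + gfun w f (n+1) (2*k+1) :=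
    fun n k hk => integral_dyad_split hfwInt hk
  have hWadd : ∀ n k, k < 2^n → Wfun w n k = Wfun w (n+1) (2*k) + Wfun w (n+1) (2*k+1) :=
    fun n k hk => integral_dyad_split hw.1 hk
  have hcarS : ∀ N n k, k < 2^n → Ssum (mufun w α) N n k ≤ C * Wfun w n k := by
    intro N n k hk
    have h1 := ofReal_Ssum_le_tsum hμnn N (N+1) n k (by omega)
    have h2 := hcar n k hk
    have h3 : ENNReal.ofReal (Ssum (mufun w α) N n k) ≤
        ENNReal.ofReal (C₂ * davg w n k * dlen n) := by
      refine le_trans h1 (le_trans (le_of_eq ?_) h2)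
      apply tsum_congr
      intro p
      rfl
    have hdd : C₂ * davg w n k * dlen n = C₂ * Wfun w n k := by
      rw [mul_assoc, davg_mul_dlen]
      rfl
    rw [hdd] at h3
    have h4 : Ssum (mufun w α) N n k ≤ C₂ * Wfun w n k := by
      have hrhs : 0 ≤ C₂ * Wfun w n k := mul_nonneg hC₂0 (hWpos n k hk).le
      exact (ENNReal.ofReal_le_ofReal_iff hrhs).mp h3
    nlinarith [hWpos n k hk]
  have hbell : ∀ N, Ssum (tfun w f α) N 0 0 ≤ 4*C*(∫ x in Set.Ico (0:ℝ) 1, (f x)^2) := by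
    intro N
    have h := bellman_aux C hC (mufun w α) (tfun w f α) (Gfun f) (gfun w f) (Wfun w)
      hμnn ht hWpos hCS hGadd hgadd hWadd N (hcarS N) (N+1) 0 0 (by omega) (by norm_num)
    have hS0 : 0 ≤ Ssum (mufun w α) N 0 0 := Ssum_nonneg' hμnn N 0 0
    have hW0 : 0 < Wfun w 0 0 := hWpos 0 0 (by norm_num)
    have hfrac : 0 ≤ gfun w f 0 0 ^2 / (Wfun w 0 0 + Ssum (mufun w α) N 0 0 / C) := by positivity
    have hG0 : Gfun f 0 0 = ∫ x in Set.Ico (0:ℝ) 1, (f x)^2 := by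
      rw [Gfun, dyad_zero]
    rw [hG0] at h
    set d := gfun w f 0 0 ^ 2 / (Wfun w 0 0 + Ssum (mufun w α) N 0 0 / C) with hd
    nlinarith [h, mul_nonneg (mul_nonneg (by norm_num : (0:ℝ) ≤ 4) hC.le) hfrac]
  rw [ENNReal.tsum_eq_iSup_sum]
  apply iSup_le
  intro F
  set N := F.sup Prod.fst with hNdef
  calc (∑ p ∈ F, if p.2 < 2 ^ p.1 then
          ENNReal.ofReal
            ((davg (fun t => f t * Real.sqrt (w t)) p.1 p.2) ^ 2 * α p.1 p.2)
        else 0)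
      = ∑ p ∈ F.filter (fun p => p.2 < 2 ^ p.1),
          ENNReal.ofReal (tfun w f α p.1 p.2) := (Finset.sum_filter _ _).symm
    _ ≤ ENNReal.ofReal (Ssum (tfun w f α) N 0 0) := by
        apply finsetsum_le_Ssum htnn N (N+1) 0 0 (by omega)
        intro p hp
        rw [Finset.mem_filter] at hp
        constructor
        · rw [dyad_zero]
          exact dyad_subset_unit hp.2
        · exact Finset.le_sup (f := Prod.fst) hp.1
    _ ≤ ENNReal.ofReal ((4*(C₂+1)) * ∫ x in Set.Ico (0 : ℝ) 1, (f x) ^ 2) :=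
        ENNReal.ofReal_le_ofReal (hbell N)


/-- Lemma 2.1. -/
theorem lemma_2_1 (w : ℝ → ℝ) (hw : IsWeight w)
    (α : ℕ → ℕ → ℝ) (hα : ∀ n k, 0 ≤ α n k) :
    (∃ C₁ : ℝ, 0 ≤ C₁ ∧
        ∀ f : ℝ → ℝ, MemLp f 2 (volume.restrict (Set.Ico (0 : ℝ) 1)) →
          (∑' p : ℕ × ℕ,
              if p.2 < 2 ^ p.1 then
                ENNReal.ofReal
                  ((davg (fun t => f t * Real.sqrt (w t)) p.1 p.2) ^ 2 * α p.1 p.2)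
              else 0) ≤
            ENNReal.ofReal (C₁ * ∫ x in Set.Ico (0 : ℝ) 1, (f x) ^ 2)) ↔
      (∃ C₂ : ℝ, 0 ≤ C₂ ∧
        ∀ m j : ℕ, j < 2 ^ m →
          (∑' p : ℕ × ℕ,
              if dyad p.1 p.2 ⊆ dyad m j then
                ENNReal.ofReal ((davg w p.1 p.2) ^ 2 * α p.1 p.2)
              else 0) ≤
            ENNReal.ofReal (C₂ * davg w m j * dlen m)) := by
  constructor
  · rintro ⟨C₁, hC₁0, hbound⟩
    refine ⟨C₁, hC₁0, ?_⟩
    intro m j hj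
    set f : ℝ → ℝ := (dyad m j).indicator (fun x => Real.sqrt (w x)) with hfdef
    have hmsqrt : AEStronglyMeasurable (fun x => Real.sqrt (w x))
        (volume.restrict (Set.Ico (0:ℝ) 1)) :=
      Real.continuous_sqrt.comp_aestronglyMeasurable hw.1.aestronglyMeasurable
    have hfm : AEStronglyMeasurable f (volume.restrict (Set.Ico (0:ℝ) 1)) :=
      hmsqrt.indicator (measurableSet_dyad m j)
    have eq_ae : (fun x => f x ^ 2) =ᵐ[volume.restrict (Set.Ico (0:ℝ) 1)]
        (dyad m j).indicator w := by
      filter_upwards [hw.2] with x hx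
      by_cases hxd : x ∈ dyad m j
      · simp only [hfdef, Set.indicator_of_mem hxd]
        rw [Real.sq_sqrt hx.le]
      · simp only [hfdef, Set.indicator_of_notMem hxd]
        norm_num
    have hfmem : MemLp f 2 (volume.restrict (Set.Ico (0:ℝ) 1)) := by
      rw [memLp_two_iff_integrable_sq hfm]
      exact ((hw.1.indicator (measurableSet_dyad m j)).congr eq_ae.symm)
    have hterm : ∀ p : ℕ × ℕ,
        (if dyad p.1 p.2 ⊆ dyad m j then
          ENNReal.ofReal ((davg w p.1 p.2) ^ 2 * α p.1 p.2) else 0) ≤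
        (if p.2 < 2 ^ p.1 then
          ENNReal.ofReal
            ((davg (fun t => f t * Real.sqrt (w t)) p.1 p.2) ^ 2 * α p.1 p.2)
          else 0) := by
      intro p
      by_cases hp : dyad p.1 p.2 ⊆ dyad m j
      · rw [if_pos hp, if_pos (subset_lt_pow hp hj)]
        have heq : (∫ x in dyad p.1 p.2, f x * Real.sqrt (w x)) = ∫ x in dyad p.1 p.2, w x := by
          apply setIntegral_congr_ae (measurableSet_dyad _ _)
          filter_upwards [(ae_restrict_iff' measurableSet_Ico).mp hw.2] with x hx hxd
          have hwx : 0 < w x := hx (dyad_subset_unit (subset_lt_pow hp hj) hxd)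
          rw [hfdef, Set.indicator_of_mem (hp hxd)]
          exact Real.mul_self_sqrt hwx.le
        have : davg (fun t => f t * Real.sqrt (w t)) p.1 p.2 = davg w p.1 p.2 := by
          rw [davg, davg, heq]
        rw [this]
      · rw [if_neg hp]
        exact zero_le
    have h1 := ENNReal.tsum_le_tsum hterm
    have h2 := hbound f hfmem
    refine le_trans h1 (le_trans h2 (le_of_eq ?_))
    congr 1
    have e1 : (∫ x in Set.Ico (0:ℝ) 1, (f x)^2) = ∫ x in dyad m j, w x := by
      rw [integral_congr_ae eq_ae, setIntegral_indicator (measurableSet_dyad m j),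
        Set.inter_eq_self_of_subset_right (dyad_subset_unit hj)]
    rw [e1, mul_assoc, davg_mul_dlen]
  · rintro ⟨C₂, hC₂0, hcar⟩
    exact ⟨4*(C₂+1), by positivity, backward_main w hw α hα C₂ hC₂0 hcar⟩

end
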